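/- arXiv:2503.07343 — 4 statements merged into one kernel-verified Lean document; each statement's English description precedes it below -/
import Mathlib

section
/- Fix f > 0 and define for c, d > 0 the function g(c,d) = √c / (d+f)^{1/2} · (d/(d+f))^c. Then for all c, d > 0 one has g(c,d) < (2ef)^{-1/2}. -/
open Real

theorem g_lt_bound (f : ℝ) (hf : 0 < f) (c d : ℝ) (hc : 0 < c) (hd : 0 < d) :
    Real.sqrt c / Real.sqrt (d + f) * (d / (d + f)) ^ c
      < (Real.sqrt (2 * Real.exp 1 * f))⁻¹ := by
  have hs : 0 < d + f := by linarith
  have hr : 0 < d / (d + f) := div_pos hd hs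
  set a : ℝ := -Real.log (d / (d + f)) with ha_def
  have hne : d / (d + f) ≠ 1 := by
    intro h
    rw [div_eq_one_iff_eq (ne_of_gt hs)] at h
    linarith
  have hlog : Real.log (d / (d + f)) < d / (d + f) - 1 :=
    Real.log_lt_sub_one_of_pos hr hne
  have hfrac : d / (d + f) - 1 = -(f / (d + f)) := by field_simp; ring
  have ha : f / (d + f) < a := by rw [ha_def]; linarith [hfrac ▸ hlog]
  have hapos : 0 < a := lt_trans (div_pos hf hs) ha
  have hfa : f < a * (d + f) := by
    have := (div_lt_iff₀ hs).mp ha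
    linarith
  have hrpow : (d / (d + f)) ^ c = Real.exp (-(a * c)) := by
    rw [Real.rpow_def_of_pos hr]
    ring_nf
    rw [ha_def]; ring_nf
  -- key: c * exp(-(2ac)) ≤ (2ea)⁻¹
  have key : c * Real.exp (-(2 * a * c)) ≤ (2 * Real.exp 1 * a)⁻¹ := by
    have hA : 2 * a * c ≤ Real.exp (2 * a * c - 1) := by
      have := Real.add_one_le_exp (2 * a * c - 1); linarith
    have hB : Real.exp (2 * a * c) = Real.exp (2 * a * c - 1) * Real.exp 1 := by
      rw [← Real.exp_add]; ring_nf
    have hC : 2 * a * c * Real.exp 1 ≤ Real.exp (2 * a * c) := by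
      rw [hB]; nlinarith [Real.exp_pos (1 : ℝ)]
    rw [Real.exp_neg, ← div_eq_mul_inv, inv_eq_one_div,
      div_le_div_iff₀ (Real.exp_pos _) (by positivity)]
    nlinarith [Real.exp_pos (2 * a * c), Real.exp_pos (1 : ℝ)]
  -- sqrt of key
  have hsqrt1 : Real.sqrt (c * Real.exp (-(2 * a * c)))
      = Real.sqrt c * Real.exp (-(a * c)) := by
    rw [show -(2 * a * c) = -(a * c) + -(a * c) by ring, Real.exp_add,
      Real.sqrt_mul hc.le, Real.sqrt_mul_self (Real.exp_pos _).le]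
  have key2 : Real.sqrt c * Real.exp (-(a * c)) ≤ (Real.sqrt (2 * Real.exp 1 * a))⁻¹ := by
    rw [← hsqrt1, ← Real.sqrt_inv]
    exact Real.sqrt_le_sqrt key
  -- final comparison
  have h2ea : (0:ℝ) < 2 * Real.exp 1 * a := by positivity
  have hfin : (Real.sqrt (2 * Real.exp 1 * a))⁻¹ / Real.sqrt (d + f)
      < (Real.sqrt (2 * Real.exp 1 * f))⁻¹ := by
    rw [div_eq_mul_inv, ← mul_inv, ← Real.sqrt_mul h2ea.le]
    apply inv_strictAnti₀ (Real.sqrt_pos.mpr (by positivity))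
    apply Real.sqrt_lt_sqrt (by positivity)
    nlinarith [Real.exp_pos (1 : ℝ)]
  calc Real.sqrt c / Real.sqrt (d + f) * (d / (d + f)) ^ c
      = Real.sqrt c * Real.exp (-(a * c)) / Real.sqrt (d + f) := by
        rw [hrpow]; ring
    _ ≤ (Real.sqrt (2 * Real.exp 1 * a))⁻¹ / Real.sqrt (d + f) := by
        gcongr
    _ < (Real.sqrt (2 * Real.exp 1 * f))⁻¹ := hfin
end

section
/- Fix f > 0 and define g(c,d) = √c / (d+f)^{1/2} · (d/(d+f))^c and h(d) = (1/2)·(log(1 + f/d))^{-1} for c, d > 0. Then g(h(d), d) → (2ef)^{-1/2} as d → ∞. -/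
theorem g_h_tendsto (f : ℝ) (hf : 0 < f)
    (g : ℝ → ℝ → ℝ) (hg : ∀ c d, g c d = Real.sqrt c / Real.sqrt (d + f) * (d / (d + f)) ^ c)
    (h : ℝ → ℝ) (hh : ∀ d, h d = (1 / 2) * (Real.log (1 + f / d))⁻¹) :
    Filter.Tendsto (fun d => g (h d) d) Filter.atTop
      (nhds ((Real.sqrt (2 * Real.exp 1 * f))⁻¹)) := by
  -- auxiliary limit: (d+f) * log (1 + f/d) → f
  have hlog0 : Filter.Tendsto (fun d : ℝ => Real.log (1 + f / d)) Filter.atTop (nhds 0) := by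
    have hdiv : Filter.Tendsto (fun d : ℝ => f / d) Filter.atTop (nhds 0) :=
      Filter.Tendsto.div_atTop (tendsto_const_nhds) Filter.tendsto_id
    have : Filter.Tendsto (fun d : ℝ => 1 + f / d) Filter.atTop (nhds 1) := by
      simpa using (tendsto_const_nhds (x := (1:ℝ))).add hdiv
    have hcont : ContinuousAt Real.log 1 := Real.continuousAt_log (by norm_num)
    simpa [Function.comp_def] using hcont.tendsto.comp this
  have hA : Filter.Tendsto (fun d : ℝ => (d + f) * Real.log (1 + f / d)) Filter.atTop
      (nhds f) := by
    have h1 := Real.tendsto_mul_log_one_add_div_atTop f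
    have h2 : Filter.Tendsto (fun d : ℝ => f * Real.log (1 + f / d)) Filter.atTop (nhds 0) := by
      simpa using (tendsto_const_nhds (x := f)).mul hlog0
    have := h1.add h2
    simp only [add_zero] at this
    refine this.congr (fun d => by ring)
  -- the "model" function
  have hB : Filter.Tendsto
      (fun d : ℝ => Real.sqrt ((2 * ((d + f) * Real.log (1 + f / d)))⁻¹) * Real.exp (-(1/2)))
      Filter.atTop (nhds ((Real.sqrt (2 * Real.exp 1 * f))⁻¹)) := by
    have hc : ContinuousAt (fun x : ℝ => Real.sqrt ((2 * x)⁻¹) * Real.exp (-(1/2))) f := by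
      have : ContinuousAt (fun x : ℝ => (2 * x)⁻¹) f :=
        (continuousAt_const.mul continuousAt_id).inv₀ (mul_ne_zero two_ne_zero hf.ne')
      exact ((Real.continuous_sqrt.continuousAt).comp this).mul continuousAt_const
    have := hc.tendsto.comp hA
    have hval : Real.sqrt ((2 * f)⁻¹) * Real.exp (-(1/2))
        = (Real.sqrt (2 * Real.exp 1 * f))⁻¹ := by
      rw [Real.sqrt_inv, Real.exp_neg, ← mul_inv]
      congr 1
      rw [Real.exp_half, ← Real.sqrt_mul (by positivity : (0:ℝ) ≤ 2 * f)]
      congr 1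
      ring
    rw [← hval]
    exact this
  refine hB.congr' ?_
  filter_upwards [Filter.eventually_gt_atTop 0] with d hd
  have hdf : 0 < d + f := by linarith
  have hfd : 0 < f / d := div_pos hf hd
  have hlpos : 0 < Real.log (1 + f / d) := Real.log_pos (by linarith)
  have hlne : Real.log (1 + f / d) ≠ 0 := ne_of_gt hlpos
  have hhd : 0 < h d := by rw [hh]; positivity
  have hbase : 0 < d / (d + f) := div_pos hd hdf
  rw [hg, hh]
  have hexp : (d / (d + f) : ℝ) ^ ((1:ℝ) / 2 * (Real.log (1 + f / d))⁻¹)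
      = Real.exp (-(1/2)) := by
    rw [Real.rpow_def_of_pos hbase]
    congr 1
    have hlogd : Real.log (d / (d + f)) = -Real.log (1 + f / d) := by
      rw [Real.log_div (ne_of_gt hd) (ne_of_gt hdf)]
      have : (1 : ℝ) + f / d = (d + f) / d := by field_simp
      rw [this, Real.log_div (ne_of_gt hdf) (ne_of_gt hd)]
      ring
    rw [hlogd]
    have hlne2 : Real.log ((d + f) / d) ≠ 0 := by
      have he : (1:ℝ) + f / d = (d + f) / d := by field_simp
      rwa [he] at hlne
    field_simp
  rw [hexp]
  congr 1
  rw [← Real.sqrt_div (by positivity : (0:ℝ) ≤ 1 / 2 * (Real.log (1 + f / d))⁻¹)]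
  congr 1
  field_simp
end

section
/- Combining the Gamma-ratio bound and the bound on g: for any c, d, τ > 0, ζ ∈ ℝ, a > 0 with log a ≠ ζ, one has (d^c · |ζ − log a| · e^{1/2}) / (d + (τ/(2τ+2))·(ζ − log a)²)^{c+1/2} · √(τ/(τ+1)) · Γ(c+1/2)/Γ(c) < 1. -/
lemma gamma_half_le_aux {c : ℝ} (hc : 0 < c) :
    Real.Gamma (c + 1 / 2) ≤ Real.sqrt c * Real.Gamma c := by
  have hA : 0 < Real.Gamma c := Real.Gamma_pos_of_pos hc
  have hB : 0 < Real.Gamma (c + 1) := Real.Gamma_pos_of_pos (by linarith)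
  have hC : 0 < Real.Gamma (c + 1 / 2) := Real.Gamma_pos_of_pos (by linarith)
  have hconv := Real.convexOn_log_Gamma.2 (Set.mem_Ioi.mpr hc)
    (Set.mem_Ioi.mpr (show (0:ℝ) < c + 1 by linarith))
    (by norm_num : (0:ℝ) ≤ 1/2) (by norm_num : (0:ℝ) ≤ 1/2) (by norm_num)
  simp only [smul_eq_mul, Function.comp_apply] at hconv
  rw [show 1/2 * c + 1/2 * (c+1) = c + 1/2 by ring] at hconv
  have hAB : 0 < Real.Gamma c * Real.Gamma (c + 1) := mul_pos hA hB
  have key : Real.Gamma (c + 1/2) ≤ Real.sqrt (Real.Gamma c * Real.Gamma (c + 1)) := by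
    rw [← Real.exp_log hC, ← Real.exp_log (Real.sqrt_pos.mpr hAB),
      Real.log_sqrt hAB.le, Real.log_mul hA.ne' hB.ne']
    exact Real.exp_le_exp.mpr (by linarith)
  calc Real.Gamma (c + 1/2) ≤ Real.sqrt (Real.Gamma c * Real.Gamma (c + 1)) := key
    _ = Real.sqrt c * Real.Gamma c := by
        rw [Real.Gamma_add_one hc.ne', show Real.Gamma c * (c * Real.Gamma c)
          = c * Real.Gamma c ^ 2 by ring, Real.sqrt_mul hc.le,
          Real.sqrt_sq hA.le]

lemma exp_lt_rpow_aux {c : ℝ} (hc : 0 < c) :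
    Real.exp 1 < ((2*c+1)/(2*c)) ^ (2*c+1 : ℝ) := by
  have h2c : (0:ℝ) < 2*c := by linarith
  have hr : (0:ℝ) < (2*c+1)/(2*c) := by positivity
  have hlog : Real.log (2*c/(2*c+1)) < 2*c/(2*c+1) - 1 :=
    Real.log_lt_sub_one_of_pos (by positivity) (by
      intro h
      rw [div_eq_one_iff_eq (by linarith)] at h
      linarith)
  have hinv : Real.log (2*c/(2*c+1)) = - Real.log ((2*c+1)/(2*c)) := by
    rw [Real.log_div h2c.ne' (by linarith), Real.log_div (by linarith) h2c.ne']
    ring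
  have hsub : 2*c/(2*c+1) - 1 = -(1/(2*c+1)) := by field_simp; ring
  have h1 : 1/(2*c+1) < Real.log ((2*c+1)/(2*c)) := by
    rw [hinv, hsub] at hlog; linarith
  have h2 : 1 < Real.log ((2*c+1)/(2*c)) * (2*c+1) := by
    have := (div_lt_iff₀ (by linarith : (0:ℝ) < 2*c+1)).mp (by
      rw [div_eq_mul_inv, one_mul, ← one_div]; exact h1)
    linarith
  calc Real.exp 1 < Real.exp (Real.log ((2*c+1)/(2*c)) * (2*c+1)) :=
        Real.exp_lt_exp.mpr h2
    _ = ((2*c+1)/(2*c)) ^ (2*c+1 : ℝ) := (Real.rpow_def_of_pos hr _).symm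

set_option maxHeartbeats 800000 in
theorem combined_bound (c d τ : ℝ) (hc : 0 < c) (hd : 0 < d) (hτ : 0 < τ)
    (ζ : ℝ) (a : ℝ) (ha : 0 < a) (hne : Real.log a ≠ ζ) :
    d ^ c * |ζ - Real.log a| * Real.exp (1 / 2) /
        (d + τ / (2 * τ + 2) * (ζ - Real.log a) ^ 2) ^ (c + 1 / 2) *
        Real.sqrt (τ / (τ + 1)) * (Real.Gamma (c + 1 / 2) / Real.Gamma c) < 1 := by
  set x : ℝ := ζ - Real.log a with hxdef
  have hx : x ≠ 0 := sub_ne_zero.mpr (Ne.symm hne)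
  have hx2 : 0 < x ^ 2 := by positivity
  set s : ℝ := τ / (τ + 1) with hsdef
  have hs : 0 < s := by positivity
  set f : ℝ := s * x ^ 2 / 2 with hfdef
  have hf : 0 < f := by positivity
  have hcoef : τ / (2 * τ + 2) * x ^ 2 = f := by
    rw [hfdef, hsdef]
    field_simp
  rw [hcoef]
  have hdf : 0 < d + f := by linarith
  have hP : 0 < (d + f) ^ (c + 1/2 : ℝ) := Real.rpow_pos_of_pos hdf _
  have hA : 0 < Real.Gamma c := Real.Gamma_pos_of_pos hc
  -- squared inequality via AM-GM
  have hr : (0:ℝ) < (2*c+1)/(2*c) := by positivity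
  have hp1 : (0:ℝ) ≤ d * ((2*c+1)/(2*c)) := by positivity
  have hp2 : (0:ℝ) ≤ f * (2*c+1) := by positivity
  have hw1 : (0:ℝ) ≤ 2*c/(2*c+1) := by positivity
  have hw2 : (0:ℝ) ≤ 1/(2*c+1) := by positivity
  have hwsum : 2*c/(2*c+1) + 1/(2*c+1) = 1 := by
    field_simp
  have hamgm := Real.geom_mean_le_arith_mean2_weighted hw1 hw2 hp1 hp2 hwsum
  have hsum : 2*c/(2*c+1) * (d * ((2*c+1)/(2*c))) + 1/(2*c+1) * (f * (2*c+1)) = d + f := by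
    field_simp
  rw [hsum] at hamgm
  have hbase : (0:ℝ) ≤ (d * ((2*c+1)/(2*c))) ^ (2*c/(2*c+1) : ℝ) * (f * (2*c+1)) ^ (1/(2*c+1) : ℝ) := by
    positivity
  have hpow := Real.rpow_le_rpow hbase hamgm (by linarith : (0:ℝ) ≤ 2*c+1)
  rw [Real.mul_rpow (Real.rpow_nonneg hp1 _) (Real.rpow_nonneg hp2 _)] at hpow
  rw [← Real.rpow_mul hp1, ← Real.rpow_mul hp2] at hpow
  have he1 : (2*c/(2*c+1)) * (2*c+1) = 2*c := by field_simp
  have he2 : (1/(2*c+1)) * (2*c+1) = 1 := by field_simp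
  rw [he1, he2, Real.rpow_one] at hpow
  -- hpow : (d*r)^(2c) * (f*(2c+1)) ≤ (d+f)^(2c+1)  (with natCast residue?)
  have hkey : d ^ (2*c : ℝ) * Real.exp 1 * (2*f) * c < (d + f) ^ (2*c+1 : ℝ) := by
    have hdr : (d * ((2*c+1)/(2*c))) ^ (2*c : ℝ) = d ^ (2*c : ℝ) * ((2*c+1)/(2*c)) ^ (2*c : ℝ) :=
      Real.mul_rpow hd.le hr.le
    have hrsplit : ((2*c+1)/(2*c)) ^ (2*c+1 : ℝ) = ((2*c+1)/(2*c)) ^ (2*c : ℝ) * ((2*c+1)/(2*c)) := by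
      rw [← Real.rpow_add_one hr.ne']
    have hexp := exp_lt_rpow_aux hc
    rw [hrsplit] at hexp
    -- e * 2c < r^(2c) * (2c+1)
    have h2c : (0:ℝ) < 2*c := by linarith
    have hstep : Real.exp 1 * (2*c) < ((2*c+1)/(2*c)) ^ (2*c : ℝ) * (2*c+1) := by
      have := mul_lt_mul_of_pos_right hexp h2c
      calc Real.exp 1 * (2*c) < ((2*c+1)/(2*c)) ^ (2*c : ℝ) * ((2*c+1)/(2*c)) * (2*c) := this
        _ = ((2*c+1)/(2*c)) ^ (2*c : ℝ) * (2*c+1) := by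
            field_simp
    calc d ^ (2*c : ℝ) * Real.exp 1 * (2*f) * c
        = (d ^ (2*c : ℝ) * f) * (Real.exp 1 * (2*c)) := by ring
      _ < (d ^ (2*c : ℝ) * f) * (((2*c+1)/(2*c)) ^ (2*c : ℝ) * (2*c+1)) := by
          apply mul_lt_mul_of_pos_left hstep
          positivity
      _ = (d * ((2*c+1)/(2*c))) ^ (2*c : ℝ) * (f * (2*c+1)) := by rw [hdr]; ring
      _ ≤ (d + f) ^ (2*c+1 : ℝ) := hpow
  -- M < P where M = d^c * |x| * exp(1/2) * √s * √c
  set M : ℝ := d ^ c * |x| * Real.exp (1/2) * Real.sqrt s * Real.sqrt c with hMdef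
  have hM0 : 0 ≤ M := by positivity
  have hMsq : M * M = d ^ (2*c : ℝ) * Real.exp 1 * (2*f) * c := by
    rw [hMdef]
    have h1 : d ^ c * d ^ c = d ^ (2*c : ℝ) := by
      rw [← Real.rpow_add hd]; ring_nf
    have h2 : Real.exp (1/2) * Real.exp (1/2) = Real.exp 1 := by
      rw [← Real.exp_add]; norm_num
    have h3 : |x| * |x| = x ^ 2 := by rw [← abs_mul, ← sq, abs_sq]
    have h4 : Real.sqrt s * Real.sqrt s = s := Real.mul_self_sqrt hs.le
    have h5 : Real.sqrt c * Real.sqrt c = c := Real.mul_self_sqrt hc.le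
    calc d ^ c * |x| * Real.exp (1/2) * Real.sqrt s * Real.sqrt c *
          (d ^ c * |x| * Real.exp (1/2) * Real.sqrt s * Real.sqrt c)
        = (d ^ c * d ^ c) * (|x| * |x|) * (Real.exp (1/2) * Real.exp (1/2)) *
          (Real.sqrt s * Real.sqrt s) * (Real.sqrt c * Real.sqrt c) := by ring
      _ = d ^ (2*c : ℝ) * x ^ 2 * Real.exp 1 * s * c := by rw [h1, h2, h3, h4, h5]
      _ = d ^ (2*c : ℝ) * Real.exp 1 * (2*f) * c := by rw [hfdef]; ring
  have hPsq : (d + f) ^ (c + 1/2 : ℝ) * (d + f) ^ (c + 1/2 : ℝ) = (d + f) ^ (2*c+1 : ℝ) := by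
    rw [← Real.rpow_add hdf]; ring_nf
  have hMP : M < (d + f) ^ (c + 1/2 : ℝ) := by
    have hsq : M ^ 2 < ((d + f) ^ (c + 1/2 : ℝ)) ^ 2 := by
      rw [sq, sq, hMsq, hPsq]; exact hkey
    exact lt_of_pow_lt_pow_left₀ 2 hP.le hsq
  -- Gamma bound
  have hGa : Real.Gamma (c + 1/2) / Real.Gamma c ≤ Real.sqrt c :=
    (div_le_iff₀ hA).mpr (gamma_half_le_aux hc)
  have hGpos : 0 < Real.Gamma (c + 1/2) / Real.Gamma c :=
    div_pos (Real.Gamma_pos_of_pos (by linarith)) hA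
  rw [div_mul_eq_mul_div, div_mul_eq_mul_div, div_lt_one hP]
  calc d ^ c * |x| * Real.exp (1/2) * Real.sqrt s * (Real.Gamma (c + 1/2) / Real.Gamma c)
      ≤ d ^ c * |x| * Real.exp (1/2) * Real.sqrt s * Real.sqrt c := by
        apply mul_le_mul_of_nonneg_left hGa
        positivity
    _ < (d + f) ^ (c + 1/2 : ℝ) := hMP
end

section
/- For a degenerate data sample of type 3 (there exists a ∈ 𝒜 separating failures from non-failures: a_i < a < a_j iff z_i ≠ z_j, with all non-failure IMs below a and all failure IMs above a), the likelihood ℓ(z^k|a^k, θ) tends to 1 as β → 0⁺ for any fixed α with max{a_i : z_i = 0} < α < min{a_j : z_j = 1}. -/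
open MeasureTheory

/-- The standard normal cumulative distribution function. -/
noncomputable def Phi (x : ℝ) : ℝ :=
  (Real.sqrt (2 * Real.pi))⁻¹ * ∫ t in Set.Iic x, Real.exp (-t ^ 2 / 2)

lemma gauss_integrable : Integrable (fun t : ℝ => Real.exp (-t ^ 2 / 2)) := by
  have := integrable_exp_neg_mul_sq (b := (1/2 : ℝ)) (by norm_num)
  convert this using 2 with t
  ring_nf

lemma gauss_total : (∫ t : ℝ, Real.exp (-t ^ 2 / 2)) = Real.sqrt (2 * Real.pi) := by
  have := integral_gaussian (1/2 : ℝ)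
  have h2 : (∫ t : ℝ, Real.exp (-t ^ 2 / 2)) = ∫ t : ℝ, Real.exp (-(1/2 : ℝ) * t ^ 2) := by
    congr 1 with t; ring_nf
  rw [h2, this]
  rw [show Real.pi / (1/2) = 2 * Real.pi by ring]

lemma Phi_tendsto_one : Filter.Tendsto Phi Filter.atTop (nhds 1) := by
  have h : Filter.Tendsto (fun x : ℝ => ∫ t in Set.Iic x, Real.exp (-t ^ 2 / 2))
      Filter.atTop (nhds (∫ t in ⋃ x : ℝ, Set.Iic x, Real.exp (-t ^ 2 / 2))) :=
    tendsto_setIntegral_of_monotone (fun _ => measurableSet_Iic)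
      (fun _ _ hxy => Set.Iic_subset_Iic.2 hxy)
      (gauss_integrable.integrableOn)
  have hU : (⋃ x : ℝ, Set.Iic x) = Set.univ := Set.iUnion_Iic
  rw [hU, Measure.restrict_univ, gauss_total] at h
  have := h.const_mul (Real.sqrt (2 * Real.pi))⁻¹
  have hne : Real.sqrt (2 * Real.pi) ≠ 0 := by
    positivity
  rw [inv_mul_cancel₀ hne] at this
  exact this

lemma Phi_tendsto_zero : Filter.Tendsto Phi Filter.atBot (nhds 0) := by
  have h : Filter.Tendsto (fun x : ℝ => ∫ t in Set.Iic (-x), Real.exp (-t ^ 2 / 2))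
      Filter.atTop (nhds (∫ t in ⋂ x : ℝ, Set.Iic (-x), Real.exp (-t ^ 2 / 2))) :=
    tendsto_setIntegral_of_antitone (fun _ => measurableSet_Iic)
      (fun x y hxy => Set.Iic_subset_Iic.2 (by linarith))
      ⟨0, gauss_integrable.integrableOn⟩
  have hI : (⋂ x : ℝ, Set.Iic (-x)) = ∅ := by
    ext t
    simp only [Set.mem_iInter, Set.mem_Iic, Set.mem_empty_iff_false, iff_false, not_forall]
    exact ⟨-t + 1, by linarith⟩
  rw [hI] at h
  simp only [Measure.restrict_empty, integral_zero_measure] at h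
  have h2 : Filter.Tendsto (fun x : ℝ => Phi (-x)) Filter.atTop (nhds 0) := by
    have := h.const_mul (Real.sqrt (2 * Real.pi))⁻¹
    simpa [Phi] using this
  have h3 := h2.comp (Filter.tendsto_neg_atBot_atTop (G := ℝ))
  have : ((fun x : ℝ => Phi (-x)) ∘ Neg.neg) = Phi := by
    funext x; simp
  rwa [this] at h3

theorem type3_degenerate_likelihood_tendsto_one
    (k : ℕ) (a : Fin k → ℝ) (ha : ∀ i, 0 < a i) (z : Fin k → ℕ) (hz : ∀ i, z i ≤ 1)
    (α : ℝ) (hα : 0 < α)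
    (hsep0 : ∀ i, z i = 0 → a i < α) (hsep1 : ∀ i, z i = 1 → α < a i) :
    Filter.Tendsto
      (fun β : ℝ =>
        ∏ i : Fin k, Phi ((Real.log (a i) - Real.log α) / β) ^ (z i) *
          (1 - Phi ((Real.log (a i) - Real.log α) / β)) ^ (1 - z i))
      (nhdsWithin 0 (Set.Ioi 0)) (nhds 1) := by
  have key : ∀ i : Fin k,
      Filter.Tendsto (fun β : ℝ =>
        Phi ((Real.log (a i) - Real.log α) / β) ^ (z i) *
          (1 - Phi ((Real.log (a i) - Real.log α) / β)) ^ (1 - z i))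
        (nhdsWithin 0 (Set.Ioi 0)) (nhds 1) := by
    intro i
    set c := Real.log (a i) - Real.log α with hc
    rcases Nat.le_one_iff_eq_zero_or_eq_one.mp (hz i) with h | h
    all_goals rw [h]
    · -- z i = 0 : c < 0, Phi → 0
      have hcneg : c < 0 := by
        have := Real.log_lt_log (ha i) (hsep0 i h)
        simp [hc]; linarith
      have harg : Filter.Tendsto (fun β : ℝ => c / β) (nhdsWithin 0 (Set.Ioi 0))
          Filter.atBot := by
        have hinv : Filter.Tendsto (fun β : ℝ => β⁻¹) (nhdsWithin 0 (Set.Ioi 0))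
            Filter.atTop := tendsto_inv_nhdsGT_zero
        have := (Filter.tendsto_const_mul_atBot_of_neg hcneg).mpr hinv
        simpa [div_eq_mul_inv] using this
      have hPhi := Phi_tendsto_zero.comp harg
      have : Filter.Tendsto (fun β : ℝ => 1 - Phi (c / β)) (nhdsWithin 0 (Set.Ioi 0))
          (nhds 1) := by
        have := (tendsto_const_nhds (x := (1:ℝ))).sub hPhi
        simpa using this
      simpa using this
    · -- z i = 1 : c > 0, Phi → 1
      have hcpos : 0 < c := by
        have := Real.log_lt_log hα (hsep1 i h)
        simp [hc]; linarith
      have harg : Filter.Tendsto (fun β : ℝ => c / β) (nhdsWithin 0 (Set.Ioi 0))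
          Filter.atTop := by
        have hinv : Filter.Tendsto (fun β : ℝ => β⁻¹) (nhdsWithin 0 (Set.Ioi 0))
            Filter.atTop := tendsto_inv_nhdsGT_zero
        have := hinv.const_mul_atTop hcpos
        simpa [div_eq_mul_inv] using this
      have hPhi := Phi_tendsto_one.comp harg
      simpa [Function.comp_def] using hPhi
  have := tendsto_finset_prod (f := fun (i : Fin k) (β : ℝ) =>
      Phi ((Real.log (a i) - Real.log α) / β) ^ (z i) *
        (1 - Phi ((Real.log (a i) - Real.log α) / β)) ^ (1 - z i))
    (x := nhdsWithin 0 (Set.Ioi 0)) (a := fun _ => 1) Finset.univ (fun i _ => key i)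
  simpa using this
end
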